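/- arXiv:1908.11009 — 2 statements merged into one kernel-verified Lean document; each statement's English description precedes it below -/
import Mathlib

section
/- For every nonnegative integer n and real $\alpha$, the type 2 degenerate cosine-Bernoulli polynomials of order $\alpha$ satisfy $B_{n,\lambda}^{(c,\alpha)}(x,y)=\sum_{k=0}^{n}\sum_{m=0}^{\lfloor k/2\rfloor}\binom{n}{k}B_{n-k,\lambda}^{(\alpha)}(x)(-1)^m\lambda^{k-2m}y^{2m}S_1(k,2m)$. -/
open PowerSeries Finset Complex

/-- The degenerate falling factorial `(x)_{n,λ} = x(x-λ)⋯(x-(n-1)λ)`. -/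
noncomputable def dff (l x : ℂ) (n : ℕ) : ℂ := ∏ j ∈ Finset.range n, (x - j * l)

/-- Exponential generating function of a sequence: `Σ f n * t^n / n!`. -/
noncomputable def egf (f : ℕ → ℂ) : PowerSeries ℂ := PowerSeries.mk fun n => f n / n.factorial

/-- The degenerate exponential `e_λ^x(t) = (1+λt)^{x/λ} = Σ (x)_{n,λ} t^n/n!` as a power series. -/
noncomputable def degExp (l x : ℂ) : PowerSeries ℂ := egf (dff l x)

/-- The degenerate cosine `cos_λ^{(y)}(t) = cos((y/λ) log(1+λt)) = (e_λ^{iy}(t)+e_λ^{-iy}(t))/2`. -/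
noncomputable def degCos (l y : ℂ) : PowerSeries ℂ :=
  PowerSeries.C (R := ℂ) (1/2) * (degExp l (Complex.I * y) + degExp l (-(Complex.I * y)))

/-- The degenerate sine `sin_λ^{(y)}(t) = sin((y/λ) log(1+λt)) = (e_λ^{iy}(t)-e_λ^{-iy}(t))/(2i)`. -/
noncomputable def degSin (l y : ℂ) : PowerSeries ℂ :=
  PowerSeries.C (R := ℂ) (1/(2*Complex.I)) * (degExp l (Complex.I * y) - degExp l (-(Complex.I * y)))

/-- The exponential series `e^{at} = Σ a^n t^n/n!`. -/
noncomputable def expS (a : ℂ) : PowerSeries ℂ := egf (fun n => a ^ n)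

/-- The series of `log(1+t)`. -/
noncomputable def logS : PowerSeries ℂ := PowerSeries.mk fun n => if n = 0 then 0 else (-1)^(n+1) / n

lemma logS_const : constantCoeff (R := ℂ) logS = 0 := by
  simp [logS, ← coeff_zero_eq_constantCoeff]

lemma deriv_logS : d⁄dX ℂ logS = PowerSeries.mk fun n => (-1)^n := by
  ext n
  rw [coeff_derivative]
  simp only [logS, coeff_mk, Nat.succ_ne_zero, if_false]
  have h : ((n : ℂ) + 1) ≠ 0 := Nat.cast_add_one_ne_zero n
  push_cast
  field_simp
  ring

lemma one_add_X_mul_deriv : (1 + X) * d⁄dX ℂ logS = 1 := by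
  rw [deriv_logS]
  ext n
  rw [add_mul, one_mul, map_add]
  cases n with
  | zero => simp [coeff_zero_eq_constantCoeff, map_mul]
  | succ k => simp [coeff_succ_X_mul, coeff_mk, pow_succ]

section S1facts
variable (S1 : ℕ → ℕ → ℂ)
  (hS1 : ∀ j, logS ^ j = PowerSeries.C (R := ℂ) (Nat.factorial j) * egf (fun k => S1 k j))

include hS1

lemma cf (k j : ℕ) : (k.factorial : ℂ) * coeff (R := ℂ) k (logS ^ j) = (j.factorial : ℂ) * S1 k j := by
  have h := congrArg (coeff (R := ℂ) k) (hS1 j)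
  rw [coeff_C_mul] at h
  simp only [egf, coeff_mk] at h
  rw [h]
  have hk : (k.factorial : ℂ) ≠ 0 := Nat.cast_ne_zero.mpr k.factorial_ne_zero
  field_simp

lemma S1_zero (k : ℕ) : S1 k 0 = if k = 0 then 1 else 0 := by
  have h := cf S1 hS1 k 0
  rw [pow_zero, coeff_one] at h
  have hk : (k.factorial : ℂ) ≠ 0 := Nat.cast_ne_zero.mpr k.factorial_ne_zero
  simp only [Nat.factorial_zero, Nat.cast_one, one_mul] at h
  rw [← h]
  split
  · subst ‹k = 0›; simp
  · simp [*]

lemma S1_vanish (k j : ℕ) (hkj : k < j) : S1 k j = 0 := by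
  have hdvd : (X : PowerSeries ℂ) ^ j ∣ logS ^ j :=
    pow_dvd_pow_of_dvd (X_dvd_iff.mpr logS_const) j
  obtain ⟨q, hq⟩ := hdvd
  have h := cf S1 hS1 k j
  rw [hq, coeff_X_pow_mul', if_neg (by omega)] at h
  have hj : (j.factorial : ℂ) ≠ 0 := Nat.cast_ne_zero.mpr j.factorial_ne_zero
  rw [mul_zero] at h
  exact (mul_eq_zero.mp h.symm).resolve_left hj

lemma S1_rec (k j : ℕ) : S1 (k+1) (j+1) = S1 k j - k * S1 k (j+1) := by
  -- derivative identity
  have hD : (1 + X) * d⁄dX ℂ (logS ^ (j+1)) = PowerSeries.C (R := ℂ) ((j:ℂ)+1) * logS ^ j := by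
    rw [Derivation.leibniz_pow]
    have h1 : (j + 1) • (logS ^ (j+1-1)) • d⁄dX ℂ logS
        = PowerSeries.C (R := ℂ) ((j:ℂ)+1) * (logS ^ j * d⁄dX ℂ logS) := by
      rw [smul_eq_mul, nsmul_eq_mul]
      congr 1
      rw [show ((j:ℂ)+1) = ((j+1 : ℕ) : ℂ) by push_cast; ring, ← map_natCast (PowerSeries.C (R := ℂ))]
    rw [h1, mul_left_comm, mul_left_comm (1 + X), one_add_X_mul_deriv, mul_one]
  -- coefficient k of both sides
  have E : ((k:ℂ)+1) * coeff (R := ℂ) (k+1) (logS ^ (j+1)) + (k:ℂ) * coeff (R := ℂ) k (logS ^ (j+1))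
      = ((j:ℂ)+1) * coeff (R := ℂ) k (logS ^ j) := by
    have h := congrArg (coeff (R := ℂ) k) hD
    rw [add_mul, one_mul, map_add, coeff_C_mul] at h
    rw [coeff_derivative] at h
    have hXD : coeff (R := ℂ) k (X * d⁄dX ℂ (logS ^ (j+1))) = (k:ℂ) * coeff (R := ℂ) k (logS ^ (j+1)) := by
      cases k with
      | zero => simp [coeff_zero_eq_constantCoeff, map_mul]
      | succ s =>
        rw [coeff_succ_X_mul, coeff_derivative]
        push_cast; ring
    rw [hXD] at h
    linear_combination h
  have c1 := cf S1 hS1 (k+1) (j+1)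
  have c2 := cf S1 hS1 k (j+1)
  have c3 := cf S1 hS1 k j
  have hj : ((j+1).factorial : ℂ) ≠ 0 := Nat.cast_ne_zero.mpr (j+1).factorial_ne_zero
  apply mul_left_cancel₀ hj
  push_cast [Nat.factorial_succ] at c1 c2 c3 ⊢
  linear_combination (k.factorial : ℂ) * E - c1 - (k:ℂ) * c2 + ((j:ℂ)+1) * c3

lemma dff_eq (l a : ℂ) : ∀ k, dff l a k = ∑ j ∈ range (k+1), S1 k j * l^(k-j) * a^j := by
  intro k
  induction k with
  | zero => simp [dff, S1_zero S1 hS1 0]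
  | succ k ih =>
    have hstep : dff l a (k+1) = dff l a k * (a - k * l) := Finset.prod_range_succ _ _
    rw [hstep, ih]
    rw [Finset.sum_range_succ' (fun j => S1 (k+1) j * l^(k+1-j) * a^j) (k+1)]
    have h0' : S1 (k+1) 0 * l^(k+1-0) * a^0 = 0 := by
      rw [S1_zero S1 hS1 (k+1)]; simp
    rw [h0', add_zero]
    have hterm : ∀ i ∈ range (k+1), S1 (k+1) (i+1) * l^(k+1-(i+1)) * a^(i+1)
        = (S1 k i - k * S1 k (i+1)) * l^(k-i) * a^(i+1) := by
      intro i _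
      rw [S1_rec S1 hS1 k i, Nat.succ_sub_succ]
    rw [Finset.sum_congr rfl hterm]
    simp only [sub_mul, Finset.sum_sub_distrib]
    have hA : ∑ i ∈ range (k+1), S1 k i * l^(k-i) * a^(i+1)
        = (∑ j ∈ range (k+1), S1 k j * l^(k-j) * a^j) * a := by
      rw [Finset.sum_mul]
      exact Finset.sum_congr rfl fun i _ => by rw [pow_succ]; ring
    have hB : ∑ i ∈ range (k+1), ↑k * S1 k (i+1) * l^(k-i) * a^(i+1)
        = (∑ j ∈ range (k+1), S1 k j * l^(k-j) * a^j) * (↑k * l) := by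
      rw [Finset.sum_range_succ, S1_vanish S1 hS1 k (k+1) (by omega),
        Finset.sum_range_succ' (fun j => S1 k j * l^(k-j) * a^j) k, add_mul]
      have hz : S1 k 0 * l^(k-0) * a^0 * ((k:ℂ) * l) = 0 := by
        rcases Nat.eq_zero_or_pos k with h | h
        · subst h; simp
        · rw [S1_zero S1 hS1 k, if_neg (by omega)]; ring
      rw [hz, add_zero, Finset.sum_mul]
      simp only [mul_zero, zero_mul, add_zero]
      refine Finset.sum_congr rfl fun i hi => ?_
      have hik : i < k := Finset.mem_range.mp hi
      have he : k - i = (k - (i+1)) + 1 := by omega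
      rw [he, pow_succ]
      ring
    rw [hA, hB, mul_sub]

lemma cos_sum (l yc : ℂ) (k : ℕ) :
    (dff l (Complex.I*yc) k + dff l (-(Complex.I*yc)) k) / 2
      = ∑ m ∈ range (k/2+1), (-1:ℂ)^m * l^(k-2*m) * yc^(2*m) * S1 k (2*m) := by
  rw [dff_eq S1 hS1, dff_eq S1 hS1, ← Finset.sum_add_distrib, Finset.sum_div]
  have hfilter : ∑ j ∈ (range (k+1)).filter (fun j => Even j),
      (S1 k j * l^(k-j) * (Complex.I*yc)^j + S1 k j * l^(k-j) * (-(Complex.I*yc))^j) / 2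
      = ∑ j ∈ range (k+1),
      (S1 k j * l^(k-j) * (Complex.I*yc)^j + S1 k j * l^(k-j) * (-(Complex.I*yc))^j) / 2 := by
    apply Finset.sum_filter_of_ne
    intro j _ hne
    by_contra hodd
    rw [Nat.not_even_iff_odd] at hodd
    apply hne
    rw [Odd.neg_pow hodd]
    ring
  rw [← hfilter]
  refine Finset.sum_nbij' (fun j => j / 2) (fun m => 2 * m) ?_ ?_ ?_ ?_ ?_
  · intro j hj
    rw [Finset.mem_filter, Finset.mem_range] at hj
    obtain ⟨hjk, r, hr⟩ := hj
    rw [Finset.mem_range]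
    omega
  · intro m hm
    rw [Finset.mem_range] at hm
    rw [Finset.mem_filter, Finset.mem_range]
    exact ⟨by omega, ⟨m, by omega⟩⟩
  · intro j hj
    rw [Finset.mem_filter] at hj
    obtain ⟨_, r, hr⟩ := hj
    omega
  · intro m _
    omega
  · intro j hj
    rw [Finset.mem_filter] at hj
    obtain ⟨hjk, r, hr⟩ := hj
    obtain rfl : j = 2 * r := by omega
    have hdiv : 2 * r / 2 = r := by omega
    rw [hdiv]
    have hneg : (-(Complex.I*yc))^(2*r) = (Complex.I*yc)^(2*r) := Even.neg_pow ⟨r, by omega⟩ _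
    have hiy : (Complex.I*yc)^(2*r) = (-1:ℂ)^r * yc^(2*r) := by
      rw [pow_mul, show (Complex.I*yc)^2 = -(yc^2) by rw [mul_pow, Complex.I_sq]; ring,
        neg_pow, ← pow_mul]
    rw [hneg, hiy]
    ring

end S1facts

theorem stmt11 (lam x y : ℝ) (F : PowerSeries ℂ) (Ba Bca : ℕ → ℂ) (S1 : ℕ → ℕ → ℂ)
    (hBa : egf Ba = F * degExp lam x)
    (hBca : egf Bca = F * degExp lam x * degCos lam y)
    (hS1 : ∀ j, logS ^ j = PowerSeries.C (R := ℂ) (Nat.factorial j) * egf (fun k => S1 k j))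
    (n : ℕ) :
    Bca n = ∑ k ∈ Finset.range (n+1), ∑ m ∈ Finset.range (k/2+1),
      (n.choose k : ℂ) * Ba (n-k) * (-1)^m * (lam:ℂ)^(k-2*m) * (y:ℂ)^(2*m) * S1 k (2*m) := by
  have hprod : egf Bca = degCos lam y * egf Ba := by
    rw [hBca, hBa]; ring
  have hfacne : ∀ m : ℕ, (m.factorial : ℂ) ≠ 0 := fun m => Nat.cast_ne_zero.mpr m.factorial_ne_zero
  have hco : ∀ k, coeff (R := ℂ) k (degCos (lam:ℂ) (y:ℂ)) =
      (∑ m ∈ range (k/2+1), (-1:ℂ)^m * (lam:ℂ)^(k-2*m) * (y:ℂ)^(2*m) * S1 k (2*m)) / k.factorial := by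
    intro k
    have h1 : coeff (R := ℂ) k (degCos (lam:ℂ) (y:ℂ)) =
        ((dff lam (Complex.I*(y:ℂ)) k + dff lam (-(Complex.I*(y:ℂ))) k)/2) / k.factorial := by
      simp only [degCos, degExp, egf, map_add, coeff_C_mul, coeff_mk]
      ring
    rw [h1, cos_sum S1 hS1]
  have hmain : Bca n / n.factorial = ∑ k ∈ range (n+1),
      ((∑ m ∈ range (k/2+1), (-1:ℂ)^m * (lam:ℂ)^(k-2*m) * (y:ℂ)^(2*m) * S1 k (2*m)) / k.factorial)
        * (Ba (n-k) / (n-k).factorial) := by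
    have h := congrArg (coeff (R := ℂ) n) hprod
    rw [coeff_mul, Finset.Nat.sum_antidiagonal_eq_sum_range_succ_mk] at h
    have hL : coeff (R := ℂ) n (egf Bca) = Bca n / n.factorial := by simp [egf]
    rw [hL] at h
    rw [h]
    refine Finset.sum_congr rfl fun k _ => ?_
    rw [hco k]
    congr 1
    simp [egf]
  have hBcaEq : Bca n = (∑ k ∈ range (n+1),
      ((∑ m ∈ range (k/2+1), (-1:ℂ)^m * (lam:ℂ)^(k-2*m) * (y:ℂ)^(2*m) * S1 k (2*m)) / k.factorial)
        * (Ba (n-k) / (n-k).factorial)) * (n.factorial : ℂ) :=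
    (div_eq_iff (hfacne n)).mp hmain
  rw [hBcaEq, Finset.sum_mul]
  refine Finset.sum_congr rfl fun k hk => ?_
  have hkn : k ≤ n := by
    rw [Finset.mem_range] at hk; omega
  have hch : ((n.choose k : ℕ) : ℂ) * k.factorial * (n-k).factorial = n.factorial := by
    exact_mod_cast congrArg (Nat.cast : ℕ → ℂ) (Nat.choose_mul_factorial_mul_factorial hkn)
  have hrhs : ∑ m ∈ range (k/2+1),
      (n.choose k : ℂ) * Ba (n-k) * (-1)^m * (lam:ℂ)^(k-2*m) * (y:ℂ)^(2*m) * S1 k (2*m)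
      = (n.choose k : ℂ) * Ba (n-k) *
        ∑ m ∈ range (k/2+1), (-1:ℂ)^m * (lam:ℂ)^(k-2*m) * (y:ℂ)^(2*m) * S1 k (2*m) := by
    rw [Finset.mul_sum]
    exact Finset.sum_congr rfl fun m _ => by ring
  rw [hrhs]
  have hcc : (n.choose k : ℂ) = (n.factorial : ℂ) / ((k.factorial : ℂ) * (n-k).factorial) := by
    rw [eq_div_iff (mul_ne_zero (hfacne k) (hfacne (n-k)))]
    linear_combination hch
  rw [hcc]
  field_simp
end

section
/- For every positive integer n, the type 2 degenerate sine-Euler polynomials satisfy $E_{n,\lambda}^{(s)}(x,y)=\sum_{k=1}^{n}\sum_{m=0}^{\lfloor (k-1)/2\rfloor}\binom{n}{k}E_{n-k,\lambda}(x)(-1)^m\lambda^{k-2m-1}y^{2m+1}S_1(k,2m+1)$. -/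
open PowerSeries Finset Complex

lemma logS_deriv : (1 + X) * (d⁄dX ℂ logS) = 1 := by
  ext n
  rw [add_mul, one_mul, map_add]
  cases n with
  | zero =>
    simp [coeff_derivative, logS, coeff_mk]
  | succ n =>
    rw [coeff_succ_X_mul, coeff_derivative, coeff_derivative]
    simp only [logS, coeff_mk, if_neg (Nat.succ_ne_zero _), coeff_one, if_neg (Nat.succ_ne_zero _)]
    push_cast
    have h2 : ((n:ℂ)+1+1) ≠ 0 := by have := Nat.cast_add_one_ne_zero (R := ℂ) (n+1); push_cast at this; exact this
    have h1 : ((n:ℂ)+1) ≠ 0 := Nat.cast_add_one_ne_zero n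
    field_simp
    ring

lemma stirKey (n j : ℕ) :
    ((n:ℂ)+1) * coeff (R := ℂ) (n+1) (logS^(j+1)) + (n:ℂ) * coeff (R := ℂ) n (logS^(j+1))
      = ((j:ℂ)+1) * coeff (R := ℂ) n (logS^j) := by
  have hD : d⁄dX ℂ (logS^(j+1)) = (PowerSeries.C (R := ℂ) ((j:ℂ)+1)) * (logS^j * d⁄dX ℂ logS) := by
    rw [Derivation.leibniz_pow]
    simp only [nsmul_eq_mul, smul_eq_mul]
    rw [map_add, map_one, map_natCast]
    push_cast
    ring
  have hG : (1 + X) * d⁄dX ℂ (logS^(j+1)) = (PowerSeries.C (R := ℂ) ((j:ℂ)+1)) * logS^j := by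
    rw [hD]
    calc (1+X) * ((PowerSeries.C (R := ℂ) ((j:ℂ)+1)) * (logS^j * d⁄dX ℂ logS))
        = (PowerSeries.C (R := ℂ) ((j:ℂ)+1)) * logS^j * ((1+X) * d⁄dX ℂ logS) := by ring
      _ = _ := by rw [logS_deriv, mul_one]
  have h2 := congrArg (coeff (R := ℂ) n) hG
  rw [add_mul, one_mul, map_add, coeff_C_mul, coeff_derivative] at h2
  cases n with
  | zero =>
    simpa [coeff_derivative, mul_comm] using h2
  | succ n =>
    rw [coeff_succ_X_mul, coeff_derivative] at h2
    push_cast at h2 ⊢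
    linear_combination h2

noncomputable def cS (n j : ℕ) : ℂ := (n.factorial : ℂ) / (j.factorial : ℂ) * coeff (R := ℂ) n (logS ^ j)

lemma cS_rec (n j : ℕ) : cS (n+1) (j+1) = cS n j - n * cS n (j+1) := by
  have h := stirKey n j
  simp only [cS, Nat.factorial_succ]
  have h1 : ((n.factorial : ℂ)) ≠ 0 := Nat.cast_ne_zero.2 n.factorial_ne_zero
  have h2 : ((j.factorial : ℂ)) ≠ 0 := Nat.cast_ne_zero.2 j.factorial_ne_zero
  have h3 : ((j:ℂ)+1) ≠ 0 := Nat.cast_add_one_ne_zero j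
  push_cast
  field_simp
  linear_combination h

lemma cS_zero_right (n : ℕ) (hn : 0 < n) : cS n 0 = 0 := by
  simp [cS, pow_zero, coeff_one, Nat.pos_iff_ne_zero.mp hn]

lemma cS_eq_zero_of_lt (n j : ℕ) (h : n < j) : cS n j = 0 := by
  have hdvd : (X : ℂ⟦X⟧)^j ∣ logS^j := pow_dvd_pow_of_dvd (X_dvd_iff.2 logS_const) j
  have : coeff (R := ℂ) n (logS^j) = 0 := by
    obtain ⟨g, hg⟩ := hdvd
    rw [hg, coeff_X_pow_mul']
    simp [Nat.not_le.2 h]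
  simp [cS, this]

lemma cS_zero_zero : cS 0 0 = 1 := by simp [cS]

lemma nc_cS (n : ℕ) : (n:ℂ) * cS n 0 = 0 := by
  cases n with
  | zero => simp
  | succ n => rw [cS_zero_right _ (Nat.succ_pos n), mul_zero]

lemma lemA (l a : ℂ) (n : ℕ) : dff l a n = ∑ j ∈ range (n+1), a^j * l^(n-j) * cS n j := by
  induction n with
  | zero => simp [dff, cS_zero_zero]
  | succ n ih =>
    have hstep : dff l a (n+1) = dff l a n * (a - (n:ℂ)*l) := by
      rw [dff, dff, Finset.prod_range_succ]
    set S := ∑ j ∈ range (n+1), a^j * l^(n-j) * cS n j with hS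
    set g : ℕ → ℂ := fun i => a^i * l^(n+1-i) * cS n i with hg
    have h5 : ∀ j, g (j+1) = a^(j+1) * l^(n-j) * cS n (j+1) := by
      intro j; simp only [hg, Nat.succ_sub_succ]
    have hshift : ∑ j ∈ range (n+1), g (j+1) = l * S - l^(n+1) * cS n 0 := by
      have h1 : ∑ j ∈ range (n+2), g j = ∑ j ∈ range (n+1), g (j+1) + g 0 :=
        Finset.sum_range_succ' g (n+1)
      have h2 : ∑ j ∈ range (n+2), g j = ∑ j ∈ range (n+1), g j + g (n+1) :=
        Finset.sum_range_succ g (n+1)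
      have h3 : g (n+1) = 0 := by
        simp [hg, cS_eq_zero_of_lt n (n+1) (Nat.lt_succ_self n)]
      have h4 : ∑ j ∈ range (n+1), g j = l * S := by
        rw [hS, Finset.mul_sum]
        refine Finset.sum_congr rfl fun j hj => ?_
        have hj' : j ≤ n := Nat.lt_succ_iff.mp (Finset.mem_range.mp hj)
        have he : n + 1 - j = (n - j) + 1 := by omega
        simp only [hg, he, pow_succ]
        ring
      have hg0 : g 0 = l^(n+1) * cS n 0 := by simp [hg]
      rw [h2, h3, add_zero, h4] at h1
      rw [h1, hg0]
      ring
    have hrhs : ∑ j ∈ range (n+2), a^j * l^(n+1-j) * cS (n+1) j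
        = a * S - (n:ℂ) * (l * S - l^(n+1) * cS n 0) := by
      rw [Finset.sum_range_succ' (fun j => a^j * l^(n+1-j) * cS (n+1) j) (n+1)]
      have hz : a^0 * l^(n+1-0) * cS (n+1) 0 = 0 := by
        rw [cS_zero_right (n+1) (Nat.succ_pos n), mul_zero]
      rw [hz, add_zero]
      have hterm : ∀ j ∈ range (n+1), a^(j+1) * l^(n+1-(j+1)) * cS (n+1) (j+1)
          = a * (a^j * l^(n-j) * cS n j) - (n:ℂ) * g (j+1) := by
        intro j hj
        rw [Nat.succ_sub_succ, cS_rec, h5]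
        ring
      rw [Finset.sum_congr rfl hterm, Finset.sum_sub_distrib, ← Finset.mul_sum,
        ← Finset.mul_sum, hshift, hS]
    rw [hstep, ih, hrhs]
    linear_combination (-(l^(n+1))) * nc_cS n

lemma coeff_egf (f : ℕ → ℂ) (n : ℕ) : coeff (R := ℂ) n (egf f) = f n / n.factorial := coeff_mk n _

lemma degSin_coeff_zero (l y : ℂ) : coeff (R := ℂ) 0 (degSin l y) = 0 := by
  simp only [degSin, degExp]
  rw [coeff_C_mul, map_sub, coeff_egf, coeff_egf]
  simp [dff]

lemma degSin_coeff (l y : ℂ) (k : ℕ) (hk : 1 ≤ k) :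
    (k.factorial : ℂ) * coeff (R := ℂ) k (degSin l y)
      = ∑ m ∈ range ((k-1)/2+1), (-1)^m * l^(k-2*m-1) * y^(2*m+1) * cS k (2*m+1) := by
  have hfac : (k.factorial : ℂ) ≠ 0 := Nat.cast_ne_zero.2 k.factorial_ne_zero
  have h0 : (k.factorial : ℂ) * coeff (R := ℂ) k (degSin l y)
      = (1/(2*Complex.I)) * (dff l (Complex.I * y) k - dff l (-(Complex.I * y)) k) := by
    rw [degSin, coeff_C_mul, map_sub, degExp, degExp, coeff_egf, coeff_egf]
    field_simp
  rw [h0, lemA, lemA, ← Finset.sum_sub_distrib, Finset.mul_sum]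
  have hsimp : ∀ j ∈ range (k+1),
      (1/(2*Complex.I)) * ((Complex.I*y)^j * l^(k-j) * cS k j
        - (-(Complex.I*y))^j * l^(k-j) * cS k j)
      = (fun j => (1/(2*Complex.I)) * (1 - (-1:ℂ)^j) * (Complex.I*y)^j * l^(k-j) * cS k j) j := by
    intro j _
    rw [neg_pow]
    ring
  rw [Finset.sum_congr rfl hsimp]
  set h : ℕ → ℂ := fun j => (1/(2*Complex.I)) * (1 - (-1:ℂ)^j) * (Complex.I*y)^j * l^(k-j) * cS k j with hh
  have heven : ∀ j ∈ range (k+1), h j ≠ 0 → Odd j := by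
    intro j _ hne
    by_contra hodd
    have : (-1:ℂ)^j = 1 := (Nat.not_odd_iff_even.mp hodd).neg_one_pow
    apply hne
    simp only [hh, this]
    ring
  rw [← Finset.sum_filter_of_ne heven]
  have himg : (range (k+1)).filter (fun j => Odd j)
      = (range ((k-1)/2+1)).image (fun m => 2*m+1) := by
    ext j
    simp only [Finset.mem_filter, Finset.mem_range, Finset.mem_image]
    constructor
    · rintro ⟨hj, m, hm⟩
      exact ⟨m, by omega, by omega⟩
    · rintro ⟨m, hm, he⟩
      exact ⟨by omega, m, by omega⟩
  rw [himg, Finset.sum_image (fun a _ b _ hab => by omega)]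
  refine Finset.sum_congr rfl fun m hm => ?_
  simp only [hh]
  have hI : Complex.I ≠ 0 := Complex.I_ne_zero
  have hodd : (-1:ℂ)^(2*m+1) = -1 := by
    rw [pow_succ, pow_mul]
    simp
  have hIp : (Complex.I)^(2*m+1) = (-1:ℂ)^m * Complex.I := by
    rw [pow_succ, pow_mul, Complex.I_sq]
  have he : k - (2*m+1) = k - 2*m - 1 := by omega
  rw [hodd, mul_pow, hIp, he]
  field_simp
  ring

theorem stmt14 (lam x y : ℝ) (E Es : ℕ → ℂ) (S1 : ℕ → ℕ → ℂ)
    (hE : egf E * (degExp lam (1/2) + degExp lam (-(1/2))) = 2 * degExp lam x)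
    (hEs : egf Es * (degExp lam (1/2) + degExp lam (-(1/2))) =
      2 * degExp lam x * degSin lam y)
    (hS1 : ∀ j, logS ^ j = PowerSeries.C (R := ℂ) (Nat.factorial j) * egf (fun k => S1 k j))
    (n : ℕ) (hn : 0 < n) :
    Es n = ∑ k ∈ Finset.Icc 1 n, ∑ m ∈ Finset.range ((k-1)/2+1),
      (n.choose k : ℂ) * E (n-k) * (-1)^m * (lam:ℂ)^(k-2*m-1) * (y:ℂ)^(2*m+1) *
        S1 k (2*m+1) := by
  have hS1' : ∀ k j, S1 k j = cS k j := by
    intro k j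
    have h := congrArg (coeff (R := ℂ) k) (hS1 j)
    rw [coeff_C_mul, coeff_egf] at h
    have hkf : (k.factorial : ℂ) ≠ 0 := Nat.cast_ne_zero.2 k.factorial_ne_zero
    have hjf : (j.factorial : ℂ) ≠ 0 := Nat.cast_ne_zero.2 j.factorial_ne_zero
    rw [cS, h]
    field_simp
  set A := degExp (lam:ℂ) (1/2) + degExp (lam:ℂ) (-(1/2)) with hAdef
  have hA0 : coeff (R := ℂ) 0 A = 2 := by
    rw [hAdef, map_add, degExp, degExp, coeff_egf, coeff_egf]
    simp [dff]
    norm_num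
  have hAne : A ≠ 0 := by
    intro h
    rw [h] at hA0
    simp at hA0
  have hprod : egf Es = degSin (lam:ℂ) (y:ℂ) * egf E := by
    apply mul_right_cancel₀ hAne
    rw [hEs, ← hE]
    ring
  have hco := congrArg (coeff (R := ℂ) n) hprod
  rw [coeff_egf, coeff_mul, Finset.Nat.sum_antidiagonal_eq_sum_range_succ_mk] at hco
  simp only [coeff_egf] at hco
  have hsub : ∑ k ∈ range (n+1), coeff (R := ℂ) k (degSin (lam:ℂ) (y:ℂ)) * (E (n-k) / (n-k).factorial)
      = ∑ k ∈ Finset.Icc 1 n, coeff (R := ℂ) k (degSin (lam:ℂ) (y:ℂ)) * (E (n-k) / (n-k).factorial) := by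
    symm
    apply Finset.sum_subset
    · intro k hk
      simp only [Finset.mem_Icc] at hk
      simp only [Finset.mem_range]
      omega
    · intro k hk hnk
      simp only [Finset.mem_Icc, Finset.mem_range, not_and, not_le] at hk hnk
      have : k = 0 := by omega
      rw [this, degSin_coeff_zero, zero_mul]
  have hfn : (n.factorial : ℂ) ≠ 0 := Nat.cast_ne_zero.2 n.factorial_ne_zero
  rw [div_eq_iff hfn] at hco
  rw [hco, hsub, Finset.sum_mul]
  refine Finset.sum_congr rfl fun k hk => ?_
  obtain ⟨hk1, hk2⟩ := Finset.mem_Icc.mp hk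
  have hfac : (n.factorial : ℂ) = (n.choose k : ℂ) * k.factorial * (n-k).factorial := by
    exact_mod_cast congrArg (Nat.cast : ℕ → ℂ) (Nat.choose_mul_factorial_mul_factorial hk2).symm
  have hnkf : ((n-k).factorial : ℂ) ≠ 0 := Nat.cast_ne_zero.2 (n-k).factorial_ne_zero
  have hsin := degSin_coeff (lam:ℂ) (y:ℂ) k hk1
  have key : (n.choose k : ℂ) * E (n-k) * ((k.factorial:ℂ) * coeff (R := ℂ) k (degSin (lam:ℂ) (y:ℂ)))
      = ∑ m ∈ range ((k-1)/2+1), (n.choose k : ℂ) * E (n-k) * (-1)^m * (lam:ℂ)^(k-2*m-1)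
          * (y:ℂ)^(2*m+1) * cS k (2*m+1) := by
    rw [hsin, Finset.mul_sum]
    exact Finset.sum_congr rfl fun m _ => by ring
  simp only [hS1']
  rw [← key, hfac]
  field_simp
end
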